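/- For every positive integer n, the chain-packing number of TT_n (the maximum size of a family of pairwise arc-disjoint chains in TT_n) equals n(n−2)/4 when n is even, and equals (n−1)²/4 when n is odd. -/

import Mathlib

/-- The arc set of the transitive tournament `TT n` on vertices `Fin n`
(vertex `v_{i+1}` of the paper is index `i`): there is an arc `(i, j)` iff `i < j`. -/
def ttArcs (n : ℕ) : Finset (Fin n × Fin n) :=
  Finset.univ.filter fun p => p.1 < p.2

/-- A chain: a two-arc block `{(i,j), (j,k)}` with `i < j < k`. -/
def IsChainMotif {n : ℕ} (b : Finset (Fin n × Fin n)) : Prop :=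
  ∃ i j k : Fin n, i < j ∧ j < k ∧ b = {(i, j), (j, k)}

/-- A collider: a two-arc block `{(i,j), (k,j)}` with `i, k < j` and `i ≠ k`. -/
def IsColliderMotif {n : ℕ} (b : Finset (Fin n × Fin n)) : Prop :=
  ∃ i k j : Fin n, i < j ∧ k < j ∧ i ≠ k ∧ b = {(i, j), (k, j)}

/-- A fork: a two-arc block `{(i,j), (i,k)}` with `i < j`, `i < k` and `j ≠ k`. -/
def IsForkMotif {n : ℕ} (b : Finset (Fin n × Fin n)) : Prop :=
  ∃ i j k : Fin n, i < j ∧ i < k ∧ j ≠ k ∧ b = {(i, j), (i, k)}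

instance {n : ℕ} : DecidablePred (IsChainMotif (n := n)) := fun b => by
  unfold IsChainMotif; infer_instance

instance {n : ℕ} : DecidablePred (IsColliderMotif (n := n)) := fun b => by
  unfold IsColliderMotif; infer_instance

instance {n : ℕ} : DecidablePred (IsForkMotif (n := n)) := fun b => by
  unfold IsForkMotif; infer_instance

/-- `P` is a decomposition of the arc set of `TT n`: its blocks are pairwise
disjoint and their union is the whole arc set. -/
def IsTTDecomposition {n : ℕ} (P : Finset (Finset (Fin n × Fin n))) : Prop :=
  (P : Set (Finset (Fin n × Fin n))).PairwiseDisjoint id ∧ P.sup id = ttArcs n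

/-- `n` is admissible iff `n ≡ 0` or `1 (mod 4)`. -/
def Admissible (n : ℕ) : Prop := n % 4 = 0 ∨ n % 4 = 1

open Fin.NatCast

lemma sum_min_eq (n : ℕ) : ∑ j ∈ Finset.range n, min j (n - 1 - j) = (n / 2) * ((n - 1) / 2) := by
  induction n using Nat.strong_induction_on with
  | _ n ih =>
    match n with
    | 0 => simp
    | 1 => simp
    | (m+2) =>
      have h1 : ∑ j ∈ Finset.range (m+2), min j (m + 2 - 1 - j)
          = (∑ j ∈ Finset.range (m+1), min (j+1) (m - j)) + min 0 (m+1) := by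
        rw [Finset.sum_range_succ']
        congr 1
        apply Finset.sum_congr rfl
        intro j hj
        congr 1
        omega
      rw [h1, Finset.sum_range_succ]
      have h2 : ∑ j ∈ Finset.range m, min (j+1) (m - j)
          = ∑ j ∈ Finset.range m, (min j (m - 1 - j) + 1) := by
        apply Finset.sum_congr rfl
        intro j hj
        simp only [Finset.mem_range] at hj
        omega
      rw [h2, Finset.sum_add_distrib, Finset.sum_const, ih m (by omega)]
      simp only [Finset.card_range, smul_eq_mul, mul_one]
      clear h1 h2 ih
      have hmin1 : (m + 1) ⊓ (m - m) = 0 := by omega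
      have hmin2 : 0 ⊓ (m + 1) = 0 := by omega
      rw [hmin1, hmin2]
      rcases Nat.even_or_odd m with ⟨t, rfl⟩ | ⟨t, rfl⟩
      · have e1 : (t + t + 2) / 2 = t + 1 := by omega
        have e2 : (t + t + 2 - 1) / 2 = t := by omega
        have e3 : (t + t) / 2 = t := by omega
        have e4 : (t + t - 1) / 2 = t - 1 := by omega
        rw [e1, e2, e3, e4]
        cases t with
        | zero => simp
        | succ s =>
          simp only [Nat.succ_sub_one]
          ring
      · have e1 : (2 * t + 1 + 2) / 2 = t + 1 := by omega
        have e2 : (2 * t + 1 + 2 - 1) / 2 = t + 1 := by omega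
        have e3 : (2 * t + 1) / 2 = t := by omega
        have e4 : (2 * t + 1 - 1) / 2 = t := by omega
        rw [e1, e2, e3, e4]
        ring

def ttQ (n a j : ℕ) : Prop :=
  (a < j ∧ 2 * (j + 1) ≤ n + 1) ∨ (n + 1 < 2 * (j + 1) ∧ a + j + 2 ≤ n)

instance (n a j : ℕ) : Decidable (ttQ n a j) := by unfold ttQ; infer_instance

def ttK (n a j : ℕ) : ℕ := if 2 * (j + 1) ≤ n + 1 then n + a - j else j + a + 1

def ttBlk (n : ℕ) [NeZero n] (p : ℕ × ℕ) : Finset (Fin n × Fin n) :=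
  {((p.1 : Fin n), (p.2 : Fin n)), ((p.2 : Fin n), ((ttK n p.1 p.2 : ℕ) : Fin n))}

def ttI (n : ℕ) : Finset (ℕ × ℕ) :=
  (Finset.range n ×ˢ Finset.range n).filter fun p => ttQ n p.1 p.2

lemma ttQ_bounds {n a j : ℕ} (h : ttQ n a j) :
    a < j ∧ j < ttK n a j ∧ ttK n a j < n := by
  unfold ttQ at h; unfold ttK
  split_ifs <;> omega

lemma mem_ttI {n : ℕ} {p : ℕ × ℕ} (hp : p ∈ ttI n) :
    p.1 < n ∧ p.2 < n ∧ ttQ n p.1 p.2 := by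
  simp only [ttI, Finset.mem_filter, Finset.mem_product, Finset.mem_range] at hp
  exact ⟨hp.1.1, hp.1.2, hp.2⟩

lemma ttBlk_chain {n : ℕ} [NeZero n] {p : ℕ × ℕ} (hp : p ∈ ttI n) :
    IsChainMotif (ttBlk n p) := by
  obtain ⟨ha, hj, hq⟩ := mem_ttI hp
  obtain ⟨h1, h2, h3⟩ := ttQ_bounds hq
  refine ⟨(p.1 : Fin n), (p.2 : Fin n), ((ttK n p.1 p.2 : ℕ) : Fin n), ?_, ?_, rfl⟩
  · simp only [Fin.lt_def, Fin.val_natCast]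
    rw [Nat.mod_eq_of_lt ha, Nat.mod_eq_of_lt hj]; exact h1
  · simp only [Fin.lt_def, Fin.val_natCast]
    rw [Nat.mod_eq_of_lt hj, Nat.mod_eq_of_lt h3]; exact h2

lemma ttBlk_core {n : ℕ} [NeZero n] {p p' : ℕ × ℕ} (hp : p ∈ ttI n) (hp' : p' ∈ ttI n)
    {e : Fin n × Fin n} (he : e ∈ ttBlk n p) (he' : e ∈ ttBlk n p') : p = p' := by
  obtain ⟨a, j⟩ := p
  obtain ⟨a', j'⟩ := p'
  obtain ⟨ha, hj, hq⟩ := mem_ttI hp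
  obtain ⟨ha', hj', hq'⟩ := mem_ttI hp'
  obtain ⟨h1, h2, h3⟩ := ttQ_bounds hq
  obtain ⟨h1', h2', h3'⟩ := ttQ_bounds hq'
  dsimp only at *
  simp only [ttBlk, Finset.mem_insert, Finset.mem_singleton] at he he'
  have key : ∀ x y : ℕ, x < n → y < n → ((x : Fin n) : ℕ) = x := fun x y hx _ => Fin.val_cast_of_lt hx
  have vc : ∀ x : ℕ, x < n → ((x : Fin n) : ℕ) = x := fun x hx => Fin.val_cast_of_lt hx
  have hk := vc _ h3
  have hk' := vc _ h3'
  have hva := vc _ ha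
  have hvj := vc _ hj
  have hva' := vc _ ha'
  have hvj' := vc _ hj'
  unfold ttQ at hq hq'
  unfold ttK at *
  rcases he with rfl | rfl <;> rcases he' with he' | he' <;>
    (have c1 := congrArg (fun z => (z.1 : ℕ)) he'
     have c2 := congrArg (fun z => (z.2 : ℕ)) he'
     simp only at c1 c2
     rw [Prod.mk.injEq]
     constructor) <;>
    simp only [hva, hvj, hva', hvj', hk, hk'] at c1 c2 <;>
    first
      | omega
      | (split_ifs at * <;> omega)

lemma ttBlk_mem_self {n : ℕ} [NeZero n] (p : ℕ × ℕ) :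
    ((p.1 : Fin n), (p.2 : Fin n)) ∈ ttBlk n p := by
  simp [ttBlk]

lemma ttBlk_injOn {n : ℕ} [NeZero n] : Set.InjOn (ttBlk n) (ttI n) := by
  intro p hp p' hp' h
  exact ttBlk_core hp hp' (ttBlk_mem_self p) (h ▸ ttBlk_mem_self p)

lemma ttF_disjoint {n : ℕ} [NeZero n] :
    (((ttI n).image (ttBlk n) : Finset _) : Set (Finset (Fin n × Fin n))).PairwiseDisjoint id := by
  intro b hb b' hb' hne
  simp only [Finset.coe_image, Set.mem_image, Finset.mem_coe] at hb hb'
  obtain ⟨p, hp, rfl⟩ := hb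
  obtain ⟨p', hp', rfl⟩ := hb'
  simp only [Function.onFun, id]
  rw [Finset.disjoint_left]
  intro e he he'
  exact hne (congrArg (ttBlk n) (ttBlk_core hp hp' he he'))

lemma ttI_card (n : ℕ) : (ttI n).card = ∑ j ∈ Finset.range n, min j (n - 1 - j) := by
  rw [Finset.card_eq_sum_card_fiberwise
      (f := Prod.snd) (t := Finset.range n)
      (fun p hp => Finset.mem_range.mpr (mem_ttI hp).2.1)]
  apply Finset.sum_congr rfl
  intro j hj
  rw [Finset.mem_range] at hj
  have heq : (ttI n).filter (fun p => p.2 = j)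
      = ((Finset.range n).filter (fun a => ttQ n a j)).image (fun a => (a, j)) := by
    ext ⟨a, b⟩
    simp only [ttI, Finset.mem_filter, Finset.mem_product, Finset.mem_range, Finset.mem_image]
    constructor
    · rintro ⟨⟨⟨h1, h2⟩, h3⟩, rfl⟩
      exact ⟨a, ⟨h1, h3⟩, rfl⟩
    · rintro ⟨a', ⟨h1, h3⟩, h4⟩
      rw [Prod.mk.injEq] at h4
      obtain ⟨rfl, rfl⟩ := h4
      exact ⟨⟨⟨h1, hj⟩, h3⟩, rfl⟩
  rw [heq, Finset.card_image_of_injective _ (fun x y h => (Prod.mk.injEq .. ▸ h : _ ∧ _).1)]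
  rcases le_or_gt (2 * (j + 1)) (n + 1) with h | h
  · have : (Finset.range n).filter (fun a => ttQ n a j) = Finset.range j := by
      ext a
      rw [Finset.mem_filter]
      simp only [Finset.mem_filter, Finset.mem_range, ttQ]
      omega
    rw [this, Finset.card_range]
    omega
  · have : (Finset.range n).filter (fun a => ttQ n a j) = Finset.range (n - 1 - j) := by
      ext a
      rw [Finset.mem_filter]
      simp only [Finset.mem_filter, Finset.mem_range, ttQ]
      omega
    rw [this, Finset.card_range]
    omega

theorem tt_chain_packing_number (n : ℕ) (hn : 0 < n) :
    IsGreatest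
      {m : ℕ | ∃ F : Finset (Finset (Fin n × Fin n)),
        (F : Set (Finset (Fin n × Fin n))).PairwiseDisjoint id ∧
        (∀ b ∈ F, IsChainMotif b) ∧ F.card = m}
      (if Even n then n * (n - 2) / 4 else (n - 1) ^ 2 / 4) := by
  haveI : NeZero n := ⟨hn.ne'⟩
  have htarget : (if Even n then n * (n - 2) / 4 else (n - 1) ^ 2 / 4)
      = n / 2 * ((n - 1) / 2) := by
    rcases Nat.even_or_odd n with h | h
    · rw [if_pos h]
      obtain ⟨k, rfl⟩ := h
      match k with
      | 0 => simp
      | (s + 1) =>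
        have h2 : s + 1 + (s + 1) - 2 = 2 * s := by omega
        have h3 : (s + 1 + (s + 1)) * (2 * s) = 4 * ((s + 1) * s) := by ring
        have h4 : (s + 1 + (s + 1)) / 2 = s + 1 := by omega
        have h5 : (s + 1 + (s + 1) - 1) / 2 = s := by omega
        rw [h2, h3, h4, h5, Nat.mul_div_cancel_left _ (by norm_num)]
    · rw [if_neg (by rw [Nat.even_iff]; obtain ⟨k, rfl⟩ := h; omega)]
      obtain ⟨k, rfl⟩ := h
      have h2 : 2 * k + 1 - 1 = 2 * k := by omega
      have h3 : (2 * k) ^ 2 = 4 * (k * k) := by ring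
      have h4 : (2 * k + 1) / 2 = k := by omega
      have h5 : (2 * k + 1 - 1) / 2 = k := by omega
      rw [h5, h4, h2, h3, Nat.mul_div_cancel_left _ (by norm_num)]
  rw [htarget]
  constructor
  · -- membership: the explicit construction
    refine ⟨(ttI n).image (ttBlk n), ttF_disjoint, ?_, ?_⟩
    · intro b hb
      rw [Finset.mem_image] at hb
      obtain ⟨p, hp, rfl⟩ := hb
      exact ttBlk_chain hp
    · rw [Finset.card_image_of_injOn ttBlk_injOn, ttI_card, sum_min_eq]
  · -- upper bound
    rintro m ⟨F, hdisj, hchain, rfl⟩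
    classical
    let tl : Finset (Fin n × Fin n) → Fin n :=
      fun b => if h : IsChainMotif b then h.choose else ⟨0, hn⟩
    let mid : Finset (Fin n × Fin n) → Fin n :=
      fun b => if h : IsChainMotif b then h.choose_spec.choose else ⟨0, hn⟩
    let hd : Finset (Fin n × Fin n) → Fin n :=
      fun b => if h : IsChainMotif b then h.choose_spec.choose_spec.choose else ⟨0, hn⟩
    have hspec : ∀ b, IsChainMotif b →
        tl b < mid b ∧ mid b < hd b ∧ b = {(tl b, mid b), (mid b, hd b)} := by
      intro b h
      simp only [tl, mid, hd, dif_pos h]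
      exact h.choose_spec.choose_spec.choose_spec
    have hmem1 : ∀ b, IsChainMotif b → (tl b, mid b) ∈ b := by
      intro b h
      have h2 := (hspec b h).2.2
      rw [Finset.ext_iff] at h2
      exact (h2 _).mpr (by simp)
    have hmem2 : ∀ b, IsChainMotif b → (mid b, hd b) ∈ b := by
      intro b h
      have h2 := (hspec b h).2.2
      rw [Finset.ext_iff] at h2
      exact (h2 _).mpr (by simp)
    have key : ∀ b ∈ F, ∀ b' ∈ F, ∀ e : Fin n × Fin n, e ∈ b → e ∈ b' → b = b' := by
      intro b hb b' hb' e he he'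
      by_contra hne
      have hd2 := hdisj (Finset.mem_coe.mpr hb) (Finset.mem_coe.mpr hb') hne
      exact (Finset.disjoint_left.mp hd2 he) he'
    have hfiber : ∀ j : Fin n, (F.filter fun b => mid b = j).card ≤ min j.val (n - 1 - j.val) := by
      intro j
      apply le_min
      · have hle : (F.filter fun b => mid b = j).card ≤ (Finset.Iio j).card := by
          apply Finset.card_le_card_of_injOn tl
          · intro b hb
            rw [Finset.mem_coe, Finset.mem_filter] at hb
            have hs := hspec b (hchain b hb.1)
            rw [Finset.mem_coe, Finset.mem_Iio, ← hb.2]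
            exact hs.1
          · intro b hb b' hb' htl
            simp only [Finset.coe_filter, Set.mem_setOf_eq] at hb hb'
            have hs := hspec b (hchain b hb.1)
            have hs' := hspec b' (hchain b' hb'.1)
            have e2 : (tl b, mid b) ∈ b' := by
              rw [htl, hb.2, ← hb'.2]
              exact hmem1 b' (hchain b' hb'.1)
            exact key b hb.1 b' hb'.1 _ (hmem1 b (hchain b hb.1)) e2
        simpa [Fin.card_Iio] using hle
      · have hle : (F.filter fun b => mid b = j).card ≤ (Finset.Ioi j).card := by
          apply Finset.card_le_card_of_injOn hd
          · intro b hb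
            rw [Finset.mem_coe, Finset.mem_filter] at hb
            have hs := hspec b (hchain b hb.1)
            rw [Finset.mem_coe, Finset.mem_Ioi, ← hb.2]
            exact hs.2.1
          · intro b hb b' hb' hhd
            simp only [Finset.coe_filter, Set.mem_setOf_eq] at hb hb'
            have hs := hspec b (hchain b hb.1)
            have hs' := hspec b' (hchain b' hb'.1)
            have e2 : (mid b, hd b) ∈ b' := by
              rw [hhd, hb.2, ← hb'.2]
              exact hmem2 b' (hchain b' hb'.1)
            exact key b hb.1 b' hb'.1 _ (hmem2 b (hchain b hb.1)) e2
        simpa [Fin.card_Ioi] using hle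
    calc F.card = ∑ j : Fin n, (F.filter fun b => mid b = j).card :=
          Finset.card_eq_sum_card_fiberwise (fun b _ => Finset.mem_univ _)
      _ ≤ ∑ j : Fin n, min j.val (n - 1 - j.val) := Finset.sum_le_sum (fun j _ => hfiber j)
      _ = ∑ j ∈ Finset.range n, min j (n - 1 - j) := Fin.sum_univ_eq_sum_range (fun i => min i (n - 1 - i)) n
      _ = n / 2 * ((n - 1) / 2) := sum_min_eq n
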